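/- For ε ∈ (0, 1/2), with C(ε) = ln 2 + ε ln ε + (1−ε) ln(1−ε), the ratio E_F(0)/E_r(0) = (C(ε) − ln 2 − ln√(ε(1−ε))) / (ln 2 − ln(1 + 2√(ε(1−ε)))) tends to a finite limit as ε → 1/2⁻, and this limit is at most 4. -/

import Mathlib

open Filter Real Set

lemma lim_slope_log : Tendsto (fun x : ℝ => x / (-Real.log (1 - x)))
    (nhdsWithin 0 (Set.Ioi 0)) (nhds 1) := by
  have hd : HasDerivAt (fun x : ℝ => Real.log (1 - x)) (-1) 0 := by
    have h1 : HasDerivAt (fun x : ℝ => 1 - x) (-1) 0 := by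
      simpa using (hasDerivAt_id (0:ℝ)).const_sub (1:ℝ)
    have := h1.log (by norm_num)
    simpa using this
  rw [hasDerivAt_iff_tendsto_slope] at hd
  have hs : Tendsto (fun x : ℝ => Real.log (1 - x) / x)
      (nhdsWithin 0 {(0:ℝ)}ᶜ) (nhds (-1)) := by
    refine hd.congr' ?_
    filter_upwards [self_mem_nhdsWithin] with x hx
    simp [slope_def_field]
  have hs' : Tendsto (fun x : ℝ => Real.log (1 - x) / x)
      (nhdsWithin 0 (Set.Ioi 0)) (nhds (-1)) :=
    hs.mono_left (nhdsWithin_mono _ (fun x hx => ne_of_gt hx))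
  have key := (hs'.inv₀ (by norm_num)).neg
  have key2 : Tendsto (fun x : ℝ => x / (-Real.log (1 - x)))
      (nhdsWithin 0 (Set.Ioi 0)) (nhds (-((-1:ℝ))⁻¹)) := by
    refine key.congr fun x => ?_
    rw [inv_div, ← div_neg]
  have h1 : -((-1:ℝ))⁻¹ = 1 := by norm_num
  rwa [h1] at key2

lemma lim_A : Tendsto (fun ε : ℝ => (Real.log (1 - ε) - Real.log ε) / (1/2 - ε))
    (nhdsWithin ((1:ℝ)/2) (Set.Ioo 0 (1/2))) (nhds 4) := by
  have hd : HasDerivAt (fun ε : ℝ => Real.log (1 - ε) - Real.log ε) (-4) (1/2) := by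
    have h1 : HasDerivAt (fun ε : ℝ => 1 - ε) (-1) (1/2 : ℝ) := by
      simpa using (hasDerivAt_id (1/2 : ℝ)).const_sub (1:ℝ)
    have h2 := (h1.log (by norm_num)).sub ((hasDerivAt_id ((1:ℝ)/2)).log (by norm_num))
    simp only [id] at h2
    have h2' : HasDerivAt (fun ε : ℝ => Real.log (1 - ε) - Real.log ε)
        (-1 / (1 - 1 / 2) - 1 / (1 / 2)) (1 / 2) := h2
    convert h2' using 1
    norm_num
  rw [hasDerivAt_iff_tendsto_slope] at hd
  have hs : Tendsto (fun ε : ℝ => (Real.log (1 - ε) - Real.log ε) / (1/2 - ε))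
      (nhdsWithin ((1:ℝ)/2) {(1/2 : ℝ)}ᶜ) (nhds (-(-4))) := by
    refine hd.neg.congr fun ε => ?_
    rw [slope_def_field]
    have : Real.log (1 - 1/2) - Real.log (1/2) = 0 := by norm_num
    rw [this, sub_zero, ← div_neg, neg_sub]
  have h4 : (-(-4) : ℝ) = 4 := by norm_num
  rw [h4] at hs
  exact hs.mono_left (nhdsWithin_mono _ (fun x hx => ne_of_lt hx.2))

lemma lim_w : Tendsto (fun ε : ℝ => (1 - 2 * Real.sqrt (ε * (1 - ε))) / 2)
    (nhdsWithin ((1:ℝ)/2) (Set.Ioo 0 (1/2))) (nhdsWithin 0 (Set.Ioi 0)) := by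
  rw [tendsto_nhdsWithin_iff]
  constructor
  · have hc : Continuous (fun ε : ℝ => (1 - 2 * Real.sqrt (ε * (1 - ε))) / 2) := by
      continuity
    have h1 : Tendsto (fun ε : ℝ => (1 - 2 * Real.sqrt (ε * (1 - ε))) / 2)
        (nhdsWithin ((1:ℝ)/2) (Set.Ioo 0 (1/2)))
        (nhds ((1 - 2 * Real.sqrt ((1/2) * (1 - 1/2))) / 2)) :=
      (hc.tendsto (1/2)).mono_left nhdsWithin_le_nhds
    have hval : (1 - 2 * Real.sqrt ((1/2 : ℝ) * (1 - 1/2))) / 2 = 0 := by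
      rw [show (1:ℝ)/2 * (1 - 1/2) = (1/2)^2 by norm_num, Real.sqrt_sq (by norm_num)]
      norm_num
    rwa [hval] at h1
  · filter_upwards [self_mem_nhdsWithin] with ε hε
    have hε0 : 0 < ε := hε.1
    have hε2 : ε < 1/2 := hε.2
    have hlt : Real.sqrt (ε * (1 - ε)) < 1/2 := by
      rw [show (1:ℝ)/2 = Real.sqrt ((1/2)^2) by rw [Real.sqrt_sq]; norm_num]
      apply Real.sqrt_lt_sqrt (by nlinarith)
      nlinarith
    simp only [Set.mem_Ioi]
    linarith

lemma gen_alg (φ P L u v : ℝ) (hP : P ≠ 0) (hL : L ≠ 0) (h : u * v = P^2) :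
    (φ / P) * (u * (v / L)) = (P * φ) / L := by
  have h1 : (φ / P) * (u * (v / L)) = φ * (u * v) / (P * L) := by ring
  rw [h1, h]
  field_simp

theorem bsc_zero_rate_ratio_limit :
    ∃ l : ℝ, Filter.Tendsto
        (fun ε : ℝ =>
          ((Real.log 2 + ε * Real.log ε + (1 - ε) * Real.log (1 - ε))
              - Real.log 2 - Real.log (Real.sqrt (ε * (1 - ε)))) /
            (Real.log 2 - Real.log (1 + 2 * Real.sqrt (ε * (1 - ε)))))
        (nhdsWithin (1 / 2) (Set.Ioo 0 (1 / 2))) (nhds l) ∧ l ≤ 4 := by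
  refine ⟨4, ?_, le_refl 4⟩
  set F := nhdsWithin ((1:ℝ) / 2) (Set.Ioo 0 (1 / 2)) with hF
  set x : ℝ → ℝ := fun ε => (1 - 2 * Real.sqrt (ε * (1 - ε))) / 2 with hxdef
  have hC : Tendsto (fun ε : ℝ => 1 - x ε) F (nhds 1) := by
    have h1 : Tendsto (fun ε : ℝ => 1 - x ε) F (nhds (1 - 0)) :=
      tendsto_const_nhds.sub (lim_w.mono_right nhdsWithin_le_nhds)
    rwa [sub_zero] at h1
  have hD : Tendsto (fun ε : ℝ => x ε / (-Real.log (1 - x ε))) F (nhds 1) :=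
    lim_slope_log.comp lim_w
  have hprod : Tendsto (fun ε : ℝ =>
      ((Real.log (1 - ε) - Real.log ε) / (1/2 - ε)) *
        ((1 - x ε) * (x ε / (-Real.log (1 - x ε))))) F (nhds 4) := by
    have h1 := lim_A.mul (hC.mul hD)
    rwa [show (4:ℝ) * (1 * 1) = 4 by norm_num] at h1
  refine hprod.congr' ?_
  filter_upwards [self_mem_nhdsWithin] with ε hε
  have hε0 : 0 < ε := hε.1
  have hε2 : ε < 1/2 := hε.2
  have h1ε : 0 < 1 - ε := by linarith
  set s : ℝ := Real.sqrt (ε * (1 - ε)) with hsdef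
  have hs0 : 0 < s := Real.sqrt_pos.mpr (by nlinarith)
  have hs2 : s^2 = ε * (1 - ε) := Real.sq_sqrt (by nlinarith)
  have hslt : s < 1/2 := by
    rw [hsdef, show (1:ℝ)/2 = Real.sqrt ((1/2)^2) by rw [Real.sqrt_sq]; norm_num]
    apply Real.sqrt_lt_sqrt (by nlinarith)
    nlinarith
  have hP : (1/2 - ε : ℝ) ≠ 0 := by linarith
  have hL0 : Real.log 2 - Real.log (1 + 2*s) ≠ 0 := by
    have : Real.log (1 + 2*s) < Real.log 2 :=
      Real.log_lt_log (by linarith) (by linarith)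
    linarith
  have hL : -Real.log (1 - x ε) = Real.log 2 - Real.log (1 + 2*s) := by
    have hx1 : (1 : ℝ) - x ε = (1 + 2*s)/2 := by
      simp only [hxdef, hsdef]
      ring
    rw [hx1, Real.log_div (by linarith) (by norm_num)]
    ring
  have hf : Real.log 2 + ε * Real.log ε + (1 - ε) * Real.log (1 - ε)
      - Real.log 2 - Real.log s
      = (1/2 - ε) * (Real.log (1 - ε) - Real.log ε) := by
    rw [hsdef, Real.log_sqrt (by nlinarith), Real.log_mul hε0.ne' h1ε.ne']
    ring
  have hx : (1 - x ε) * x ε = (1/2 - ε)^2 := by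
    simp only [hxdef, hsdef]
    nlinarith [hs2, hsdef]
  show ((Real.log (1 - ε) - Real.log ε) / (1/2 - ε)) *
        ((1 - x ε) * (x ε / (-Real.log (1 - x ε))))
      = _
  rw [hL, hf]
  exact gen_alg _ _ _ _ _ hP hL0 hx
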